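/- Let A = (A, B, β, T) be a finite relative Rota-Baxter group. Then the Schur multiplier M_{RRB}(A) = H²_{RRB}(A, C) is a finite abelian group. -/

import Mathlib

section

variable {A B K L : Type*} [Group A] [Group B] [CommGroup K] [CommGroup L]

/-- A relative Rota-Baxter 2-cocycle `(τ₁, τ₂, ρ, χ)` of `(A, B, β, T)` with
coefficients in the trivial module `(K, L, trivial, S)`. -/
def IsRRBCocycle (β : B →* MulAut A) (T : A → B) (S : K →* L)
    (τ₁ : A → A → K) (τ₂ : B → B → L) (ρ : A → B → K) (χ : A → L) : Prop :=
  (∀ a : A, τ₁ a 1 = 1 ∧ τ₁ 1 a = 1) ∧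
  (∀ a₁ a₂ a₃ : A,
    τ₁ a₂ a₃ * (τ₁ (a₁ * a₂) a₃)⁻¹ * τ₁ a₁ (a₂ * a₃) * (τ₁ a₁ a₂)⁻¹ = 1) ∧
  (∀ b : B, τ₂ b 1 = 1 ∧ τ₂ 1 b = 1) ∧
  (∀ b₁ b₂ b₃ : B,
    τ₂ b₂ b₃ * (τ₂ (b₁ * b₂) b₃)⁻¹ * τ₂ b₁ (b₂ * b₃) * (τ₂ b₁ b₂)⁻¹ = 1) ∧
  (∀ a : A, ρ a 1 = 1) ∧ (∀ b : B, ρ 1 b = 1) ∧ (χ 1 = 1) ∧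
  (∀ (a : A) (b₁ b₂ : B), ρ a (b₁ * b₂) = ρ (β b₂ a) b₁ * ρ a b₂) ∧
  (∀ (a₁ a₂ : A) (b : B),
    ρ (a₁ * a₂) b * (ρ a₁ b)⁻¹ * (ρ a₂ b)⁻¹ * τ₁ a₁ a₂ * (τ₁ (β b a₁) (β b a₂))⁻¹ = 1) ∧
  (∀ a₁ a₂ : A,
    S (ρ a₂ (T a₁) * τ₁ a₁ (β (T a₁) a₂)) =
      τ₂ (T a₁) (T a₂) * (χ a₂ * (χ (a₁ * β (T a₁) a₂))⁻¹ * χ a₁))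

/-- A relative Rota-Baxter 2-coboundary. -/
def IsRRBCoboundary (β : B →* MulAut A) (T : A → B) (S : K →* L)
    (τ₁ : A → A → K) (τ₂ : B → B → L) (ρ : A → B → K) (χ : A → L) : Prop :=
  ∃ (θ₁ : A → K) (θ₂ : B → L),
    (∀ a₁ a₂ : A, τ₁ a₁ a₂ = θ₁ a₂ * (θ₁ (a₁ * a₂))⁻¹ * θ₁ a₁) ∧
    (∀ b₁ b₂ : B, τ₂ b₁ b₂ = θ₂ b₂ * (θ₂ (b₁ * b₂))⁻¹ * θ₂ b₁) ∧
    (∀ (a : A) (b : B), ρ a b = θ₁ a * (θ₁ (β b a))⁻¹) ∧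
    (∀ a : A, χ a = S (θ₁ a) * (θ₂ (T a))⁻¹)

end

set_option maxHeartbeats 1000000
namespace RRBProof

lemma mul_eq_one₄ {G} [CommGroup G] {a b c d a' b' c' d' : G} (h : a*b⁻¹*c*d⁻¹=1)
    (h' : a'*b'⁻¹*c'*d'⁻¹=1) : (a*a')*((b*b')⁻¹)*(c*c')*((d*d')⁻¹)=1 := by
  have := congrArg₂ (·*·) h h'
  simpa [mul_inv, mul_assoc, mul_comm, mul_left_comm] using this

lemma inv_eq_one₄ {G} [CommGroup G] {a b c d : G} (h : a*b⁻¹*c*d⁻¹=1) :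
    a⁻¹*((b⁻¹)⁻¹)*(c⁻¹)*((d⁻¹)⁻¹)=1 := by
  have := congrArg (·⁻¹) h
  simpa [mul_inv, mul_assoc, mul_comm, mul_left_comm] using this

lemma mul_eq_one₅ {G} [CommGroup G] {a b c d e a' b' c' d' e' : G} (h : a*b⁻¹*c⁻¹*d*e⁻¹=1)
    (h' : a'*b'⁻¹*c'⁻¹*d'*e'⁻¹=1) :
    (a*a')*((b*b')⁻¹)*((c*c')⁻¹)*(d*d')*((e*e')⁻¹)=1 := by
  have := congrArg₂ (·*·) h h'
  simpa [mul_inv, mul_assoc, mul_comm, mul_left_comm] using this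

lemma inv_eq_one₅ {G} [CommGroup G] {a b c d e : G} (h : a*b⁻¹*c⁻¹*d*e⁻¹=1) :
    a⁻¹*((b⁻¹)⁻¹)*((c⁻¹)⁻¹)*(d⁻¹)*((e⁻¹)⁻¹)=1 := by
  have := congrArg (·⁻¹) h
  simpa [mul_inv, mul_assoc, mul_comm, mul_left_comm] using this

variable {A B : Type*} [Group A] [Group B]

/-- The ambient commutative group of quadruples. -/
abbrev E (A B : Type*) := (A → A → ℂˣ) × (B → B → ℂˣ) × (A → B → ℂˣ) × (A → ℂˣ)

variable (β : B →* MulAut A) (T : A → B)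

def coc (z : E A B) : Prop :=
  IsRRBCocycle β T (MonoidHom.id ℂˣ) z.1 z.2.1 z.2.2.1 z.2.2.2

def Zsub : Subgroup (E A B) where
  carrier := {z | coc β T z}
  one_mem' := by
    refine ⟨?_,?_,?_,?_,?_,?_,?_,?_,?_,?_⟩ <;> intros <;> simp
  mul_mem' := by
    rintro z w ⟨z1,z2,z3,z4,z5,z6,z7,z8,z9,z10⟩ ⟨w1,w2,w3,w4,w5,w6,w7,w8,w9,w10⟩
    refine ⟨?_,?_,?_,?_,?_,?_,?_,?_,?_,?_⟩
    · intro a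
      exact ⟨by simp [(z1 a).1, (w1 a).1], by simp [(z1 a).2, (w1 a).2]⟩
    · intro a₁ a₂ a₃
      simpa using mul_eq_one₄ (z2 a₁ a₂ a₃) (w2 a₁ a₂ a₃)
    · intro b
      exact ⟨by simp [(z3 b).1, (w3 b).1], by simp [(z3 b).2, (w3 b).2]⟩
    · intro b₁ b₂ b₃
      simpa using mul_eq_one₄ (z4 b₁ b₂ b₃) (w4 b₁ b₂ b₃)
    · intro a; simp [z5 a, w5 a]
    · intro b; simp [z6 b, w6 b]
    · simp [z7, w7]
    · intro a b₁ b₂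
      have := congrArg₂ (·*·) (z8 a b₁ b₂) (w8 a b₁ b₂)
      simp only [Pi.mul_apply, Prod.fst_mul, Prod.snd_mul] at this ⊢
      simpa [mul_assoc, mul_comm, mul_left_comm] using this
    · intro a₁ a₂ b
      simpa using mul_eq_one₅ (z9 a₁ a₂ b) (w9 a₁ a₂ b)
    · intro a₁ a₂
      have := congrArg₂ (·*·) (z10 a₁ a₂) (w10 a₁ a₂)
      simp only [MonoidHom.id_apply, Pi.mul_apply, Prod.fst_mul, Prod.snd_mul] at this ⊢
      simpa [mul_inv, mul_assoc, mul_comm, mul_left_comm] using this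
  inv_mem' := by
    rintro z ⟨z1,z2,z3,z4,z5,z6,z7,z8,z9,z10⟩
    refine ⟨?_,?_,?_,?_,?_,?_,?_,?_,?_,?_⟩
    · intro a
      exact ⟨by simp [(z1 a).1], by simp [(z1 a).2]⟩
    · intro a₁ a₂ a₃
      simpa using inv_eq_one₄ (z2 a₁ a₂ a₃)
    · intro b
      exact ⟨by simp [(z3 b).1], by simp [(z3 b).2]⟩
    · intro b₁ b₂ b₃
      simpa using inv_eq_one₄ (z4 b₁ b₂ b₃)
    · intro a; simp [z5 a]
    · intro b; simp [z6 b]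
    · simp [z7]
    · intro a b₁ b₂
      have := congrArg (·⁻¹) (z8 a b₁ b₂)
      simp only [Pi.inv_apply, Prod.fst_inv, Prod.snd_inv] at this ⊢
      simpa [mul_inv, mul_assoc, mul_comm, mul_left_comm] using this
    · intro a₁ a₂ b
      simpa using inv_eq_one₅ (z9 a₁ a₂ b)
    · intro a₁ a₂
      have := congrArg (·⁻¹) (z10 a₁ a₂)
      simp only [MonoidHom.id_apply, Pi.inv_apply, Prod.fst_inv, Prod.snd_inv] at this ⊢
      simpa [mul_inv, mul_assoc, mul_comm, mul_left_comm] using this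

/-- The coboundary map as a monoid hom. -/
def dMap : ((A → ℂˣ) × (B → ℂˣ)) →* E A B where
  toFun θ := (fun a₁ a₂ => θ.1 a₂ * (θ.1 (a₁ * a₂))⁻¹ * θ.1 a₁,
              fun b₁ b₂ => θ.2 b₂ * (θ.2 (b₁ * b₂))⁻¹ * θ.2 b₁,
              fun a b => θ.1 a * (θ.1 (β b a))⁻¹,
              fun a => θ.1 a * (θ.2 (T a))⁻¹)
  map_one' := by
    refine Prod.ext ?_ (Prod.ext ?_ (Prod.ext ?_ ?_)) <;> funext <;> simp
  map_mul' θ η := by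
    refine Prod.ext ?_ (Prod.ext ?_ (Prod.ext ?_ ?_)) <;> funext <;>
      simp [mul_inv, mul_assoc, mul_comm, mul_left_comm]

lemma cob_iff (z : E A B) :
    IsRRBCoboundary β T (MonoidHom.id ℂˣ) z.1 z.2.1 z.2.2.1 z.2.2.2 ↔
      z ∈ (dMap β T).range := by
  constructor
  · rintro ⟨θ₁, θ₂, h₁, h₂, h₃, h₄⟩
    refine ⟨(θ₁, θ₂), ?_⟩
    refine (Prod.ext ?_ (Prod.ext ?_ (Prod.ext ?_ ?_))).symm <;> funext <;>
      simp_all [dMap]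
  · rintro ⟨θ, rfl⟩
    exact ⟨θ.1, θ.2, fun _ _ => rfl, fun _ _ => rfl, fun _ _ => rfl, fun _ => rfl⟩

/-- Averaging a 2-cocycle over a finite group. -/
lemma L1 {G : Type*} [Group G] [Fintype G] {τ : G → G → ℂˣ}
    (c2 : ∀ g₁ g₂ g₃ : G, τ g₂ g₃ * (τ (g₁ * g₂) g₃)⁻¹ * τ g₁ (g₂ * g₃) * (τ g₁ g₂)⁻¹ = 1)
    (g₁ g₂ : G) :
    τ g₁ g₂ ^ Fintype.card G
      = (∏ x, τ g₂ x) * (∏ x, τ (g₁ * g₂) x)⁻¹ * (∏ x, τ g₁ x) := by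
  have key : ∀ g₃, τ g₁ g₂ = τ g₂ g₃ * (τ (g₁ * g₂) g₃)⁻¹ * τ g₁ (g₂ * g₃) :=
    fun g₃ => (mul_inv_eq_one.mp (c2 g₁ g₂ g₃)).symm
  have h1 : (∏ x : G, τ g₁ (g₂ * x)) = ∏ x : G, τ g₁ x :=
    Fintype.prod_equiv (Equiv.mulLeft g₂) _ _ (fun x => rfl)
  calc τ g₁ g₂ ^ Fintype.card G
      = ∏ _x : G, τ g₁ g₂ := by
        rw [Finset.prod_const, Finset.card_univ]
    _ = ∏ x : G, (τ g₂ x * (τ (g₁ * g₂) x)⁻¹ * τ g₁ (g₂ * x)) :=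
        Finset.prod_congr rfl (fun x _ => key x)
    _ = (∏ x, τ g₂ x) * (∏ x, τ (g₁ * g₂) x)⁻¹ * (∏ x, τ g₁ x) := by
        rw [Finset.prod_mul_distrib, Finset.prod_mul_distrib, Finset.prod_inv_distrib, h1]

lemma L3 [Fintype A] (β : B →* MulAut A) {τ₁ : A → A → ℂˣ} {ρ : A → B → ℂˣ}
    (c9 : ∀ (a₁ a₂ : A) (b : B),
      ρ (a₁ * a₂) b * (ρ a₁ b)⁻¹ * (ρ a₂ b)⁻¹ * τ₁ a₁ a₂ * (τ₁ (β b a₁) (β b a₂))⁻¹ = 1)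
    (a : A) (b : B) :
    ρ a b ^ Fintype.card A = (∏ x, τ₁ a x) * (∏ x, τ₁ (β b a) x)⁻¹ := by
  have key : ∀ x : A, ρ a b
      = ρ (a * x) b * (ρ x b)⁻¹ * τ₁ a x * (τ₁ (β b a) (β b x))⁻¹ := by
    intro x
    have h := c9 a x b
    have h' : (ρ (a * x) b * (ρ x b)⁻¹ * τ₁ a x * (τ₁ (β b a) (β b x))⁻¹) * (ρ a b)⁻¹ = 1 := by
      simpa [mul_assoc, mul_comm, mul_left_comm] using h
    exact (mul_inv_eq_one.mp h').symm
  have h1 : (∏ x : A, ρ (a * x) b) = ∏ x : A, ρ x b :=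
    Fintype.prod_equiv (Equiv.mulLeft a) _ _ (fun x => rfl)
  have h2 : (∏ x : A, τ₁ (β b a) (β b x)) = ∏ x : A, τ₁ (β b a) x :=
    Fintype.prod_equiv (β b).toEquiv _ _ (fun x => rfl)
  calc ρ a b ^ Fintype.card A
      = ∏ _x : A, ρ a b := by rw [Finset.prod_const, Finset.card_univ]
    _ = ∏ x : A, (ρ (a * x) b * (ρ x b)⁻¹ * τ₁ a x * (τ₁ (β b a) (β b x))⁻¹) :=
        Finset.prod_congr rfl (fun x _ => key x)
    _ = (∏ x : A, ρ x b) * (∏ x : A, ρ x b)⁻¹ * (∏ x, τ₁ a x) * (∏ x, τ₁ (β b a) x)⁻¹ := by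
        rw [Finset.prod_mul_distrib, Finset.prod_mul_distrib, Finset.prod_mul_distrib,
          Finset.prod_inv_distrib, Finset.prod_inv_distrib, h1, h2]
    _ = (∏ x, τ₁ a x) * (∏ x, τ₁ (β b a) x)⁻¹ := by
        simp [mul_assoc, mul_comm, mul_left_comm]

lemma T_one (β : B →* MulAut A) (T : A → B)
    (hT : ∀ a₁ a₂ : A, T a₁ * T a₂ = T (a₁ * β (T a₁) a₂)) : T 1 = 1 := by
  have := hT 1 1
  simp only [map_one, mul_one] at this
  exact mul_eq_right.mp (this.trans (by simp))

lemma exists_root {M : ℕ} (hM : 0 < M) :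
    ∃ σ : ℂˣ → ℂˣ, σ 1 = 1 ∧ ∀ u, σ u ^ M = u := by
  have h : ∀ u : ℂˣ, ∃ r : ℂˣ, r ^ M = u := by
    intro u
    obtain ⟨c, hc⟩ := IsAlgClosed.exists_pow_nat_eq (u : ℂ) hM
    have hc0 : c ≠ 0 := by
      intro h0
      rw [h0, zero_pow hM.ne'] at hc
      exact u.ne_zero hc.symm
    exact ⟨Units.mk0 c hc0, Units.ext (by simpa using hc)⟩
  refine ⟨fun u => if u = 1 then 1 else Classical.choose (h u), by simp, fun u => ?_⟩
  by_cases hu : u = 1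
  · simp [hu]
  · simpa [hu] using Classical.choose_spec (h u)


lemma dMap_coc (hT : ∀ a₁ a₂ : A, T a₁ * T a₂ = T (a₁ * β (T a₁) a₂))
    {θ : (A → ℂˣ) × (B → ℂˣ)} (h1 : θ.1 1 = 1) (h2 : θ.2 1 = 1) :
    coc β T (dMap β T θ) := by
  have hT1 : T 1 = 1 := T_one β T hT
  refine ⟨?_,?_,?_,?_,?_,?_,?_,?_,?_,?_⟩
  · intro a; constructor <;> simp [dMap, h1]
  · intro a₁ a₂ a₃
    simp [dMap, mul_assoc, mul_comm, mul_left_comm]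
  · intro b; constructor <;> simp [dMap, h2]
  · intro b₁ b₂ b₃
    simp [dMap, mul_assoc, mul_comm, mul_left_comm]
  · intro a; simp [dMap]
  · intro b; simp [dMap, h1]
  · simp [dMap, h1, h2, hT1]
  · intro a b₁ b₂
    simp [dMap, map_mul, mul_assoc, mul_comm, mul_left_comm]
  · intro a₁ a₂ b
    simp [dMap, map_mul, mul_assoc, mul_comm, mul_left_comm]
  · intro a₁ a₂
    simp only [dMap, MonoidHom.coe_mk, OneHom.coe_mk, MonoidHom.id_apply, ← hT a₁ a₂]
    simp [mul_assoc, mul_comm, mul_left_comm]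


lemma key_power [Fintype A] [Fintype B]
    (hT : ∀ a₁ a₂ : A, T a₁ * T a₂ = T (a₁ * β (T a₁) a₂)) {z : E A B}
    (hz : coc β T z) :
    ∃ Ψ : (A → ℂˣ) × (B → ℂˣ), Ψ.1 1 = 1 ∧ Ψ.2 1 = 1 ∧
      z ^ (Fintype.card A * Fintype.card B * Fintype.card A) = dMap β T Ψ := by
  obtain ⟨c1, c2, c3, c4, c5, c6, c7, c8, c9, c10⟩ := hz
  set n₁ := Fintype.card A with hn₁
  set n₂ := Fintype.card B with hn₂
  let Θ : A → ℂˣ := fun a => (∏ x, z.1 a x) ^ n₂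
  let Φ : B → ℂˣ := fun b => (∏ y, z.2.1 b y) ^ n₁
  have hΘ : ∀ a, Θ a = (∏ x, z.1 a x) ^ n₂ := fun _ => rfl
  have hΦ : ∀ b, Φ b = (∏ y, z.2.1 b y) ^ n₁ := fun _ => rfl
  have P1 : ∀ a₁ a₂ : A, z.1 a₁ a₂ ^ (n₁ * n₂) = Θ a₂ * (Θ (a₁ * a₂))⁻¹ * Θ a₁ := by
    intro a₁ a₂
    have h := congrArg (· ^ n₂) (L1 c2 a₁ a₂)
    rw [hΘ, hΘ, hΘ]
    simpa [← pow_mul, mul_pow, inv_pow] using h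
  have P2 : ∀ b₁ b₂ : B, z.2.1 b₁ b₂ ^ (n₁ * n₂) = Φ b₂ * (Φ (b₁ * b₂))⁻¹ * Φ b₁ := by
    intro b₁ b₂
    have h := congrArg (· ^ n₁) (L1 c4 b₁ b₂)
    rw [hΦ, hΦ, hΦ, Nat.mul_comm n₁ n₂]
    simpa [← pow_mul, mul_pow, inv_pow] using h
  have P3 : ∀ (a : A) (b : B), z.2.2.1 a b ^ (n₁ * n₂) = Θ a * (Θ (β b a))⁻¹ := by
    intro a b
    have h := congrArg (· ^ n₂) (L3 β c9 a b)
    rw [hΘ, hΘ]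
    simpa [← pow_mul, mul_pow, inv_pow] using h
  let D : A → ℂˣ := fun a => z.2.2.2 a ^ (n₁ * n₂) * (Θ a)⁻¹ * Φ (T a)
  have hD : ∀ a, D a = z.2.2.2 a ^ (n₁ * n₂) * (Θ a)⁻¹ * Φ (T a) := fun _ => rfl
  have P4 : ∀ a₁ a₂ : A, D a₁ = D (a₁ * β (T a₁) a₂) * (D a₂)⁻¹ := by
    intro a₁ a₂
    have h10 := c10 a₁ a₂
    simp only [MonoidHom.id_apply] at h10
    have key := congrArg (· ^ (n₁ * n₂)) h10
    simp only [mul_pow, inv_pow] at key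
    rw [P3 a₂ (T a₁), P1 a₁ (β (T a₁) a₂), P2 (T a₁) (T a₂), hT a₁ a₂] at key
    have final : D a₁ * (D (a₁ * β (T a₁) a₂) * (D a₂)⁻¹)⁻¹ = 1 := by
      have hk := mul_inv_eq_one.mpr key.symm
      rw [hD, hD, hD]
      simpa [mul_inv, inv_inv, mul_assoc, mul_comm, mul_left_comm] using hk
    exact mul_inv_eq_one.mp final
  have P5 : ∀ a : A, D a ^ n₁ = 1 := by
    intro a
    have h1 : (∏ x : A, D (a * β (T a) x)) = ∏ x : A, D x :=
      Fintype.prod_equiv ((β (T a)).toEquiv.trans (Equiv.mulLeft a)) _ _ (fun x => rfl)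
    calc D a ^ n₁ = ∏ _x : A, D a := by rw [Finset.prod_const, Finset.card_univ]
      _ = ∏ x : A, (D (a * β (T a) x) * (D x)⁻¹) :=
          Finset.prod_congr rfl (fun x _ => P4 a x)
      _ = (∏ x : A, D x) * (∏ x : A, D x)⁻¹ := by
          rw [Finset.prod_mul_distrib, Finset.prod_inv_distrib, h1]
      _ = 1 := mul_inv_cancel _
  refine ⟨(fun a => Θ a ^ n₁, fun b => Φ b ^ n₁), ?_, ?_, ?_⟩
  · have : Θ 1 = 1 := by
      rw [hΘ]
      have : ∀ x : A, z.1 1 x = 1 := fun x => (c1 x).2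
      simp [this]
    simpa using congrArg (· ^ n₁) this
  · have : Φ 1 = 1 := by
      rw [hΦ]
      have : ∀ y : B, z.2.1 1 y = 1 := fun y => (c3 y).2
      simp [this]
    simpa using congrArg (· ^ n₁) this
  · refine Prod.ext ?_ (Prod.ext ?_ (Prod.ext ?_ ?_))
    · funext x y
      show z.1 x y ^ (n₁ * n₂ * n₁) = _
      have h := congrArg (· ^ n₁) (P1 x y)
      simp only [dMap, MonoidHom.coe_mk, OneHom.coe_mk]
      simpa [← pow_mul, mul_pow, inv_pow] using h
    · funext x y
      show z.2.1 x y ^ (n₁ * n₂ * n₁) = _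
      have h := congrArg (· ^ n₁) (P2 x y)
      simp only [dMap, MonoidHom.coe_mk, OneHom.coe_mk]
      simpa [← pow_mul, mul_pow, inv_pow] using h
    · funext x y
      show z.2.2.1 x y ^ (n₁ * n₂ * n₁) = _
      have h := congrArg (· ^ n₁) (P3 x y)
      simp only [dMap, MonoidHom.coe_mk, OneHom.coe_mk]
      simpa [← pow_mul, mul_pow, inv_pow] using h
    · funext x
      show z.2.2.2 x ^ (n₁ * n₂ * n₁) = _
      simp only [dMap, MonoidHom.coe_mk, OneHom.coe_mk]
      have hχ : z.2.2.2 x ^ (n₁ * n₂) = D x * Θ x * (Φ (T x))⁻¹ := by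
        rw [hD]
        simp [mul_assoc, mul_comm, mul_left_comm]
      calc z.2.2.2 x ^ (n₁ * n₂ * n₁) = (z.2.2.2 x ^ (n₁ * n₂)) ^ n₁ := by rw [pow_mul]
        _ = (D x * Θ x * (Φ (T x))⁻¹) ^ n₁ := by rw [hχ]
        _ = D x ^ n₁ * Θ x ^ n₁ * ((Φ (T x)) ^ n₁)⁻¹ := by rw [mul_pow, mul_pow, inv_pow]
        _ = Θ x ^ n₁ * (Φ (T x) ^ n₁)⁻¹ := by rw [P5 x, one_mul]


lemma exists_rep [Fintype A] [Fintype B]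
    (hT : ∀ a₁ a₂ : A, T a₁ * T a₂ = T (a₁ * β (T a₁) a₂)) {z : E A B}
    (hz : coc β T z) :
    ∃ w : E A B, w ∈ Zsub β T ∧ z * w⁻¹ ∈ (dMap β T).range ∧
      w ^ (Fintype.card A * Fintype.card B * Fintype.card A) = 1 := by
  set M := Fintype.card A * Fintype.card B * Fintype.card A with hMdef
  have hM : 0 < M := by positivity
  obtain ⟨Ψ, h1, h2, hzM⟩ := key_power β T hT hz
  obtain ⟨σ, hσ1, hσpow⟩ := exists_root hM
  set θ' : (A → ℂˣ) × (B → ℂˣ) := (σ ∘ Ψ.1, σ ∘ Ψ.2) with hθ'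
  have hθ'M : θ' ^ M = Ψ := by
    refine Prod.ext ?_ ?_ <;> funext a <;> simp [hθ', hσpow]
  have hd : dMap β T θ' ∈ Zsub β T := by
    refine dMap_coc β T hT ?_ ?_
    · show σ (Ψ.1 1) = 1
      rw [h1, hσ1]
    · show σ (Ψ.2 1) = 1
      rw [h2, hσ1]
  refine ⟨z * (dMap β T θ')⁻¹, mul_mem hz (inv_mem hd), ?_, ?_⟩
  · have : z * (z * (dMap β T θ')⁻¹)⁻¹ = dMap β T θ' := by
      simp [mul_inv_rev, inv_inv, mul_assoc, mul_comm, mul_left_comm]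
    rw [this]
    exact ⟨θ', rfl⟩
  · rw [mul_pow, inv_pow, hzM, ← map_pow, hθ'M, mul_inv_cancel]

set_option linter.unusedSectionVars false in
lemma pow_set_finite [Fintype A] [Fintype B] {M : ℕ} (hM : 0 < M) :
    {w : E A B | w ^ M = 1}.Finite := by
  haveI : NeZero M := ⟨hM.ne'⟩
  rw [Set.finite_coe_iff.symm]
  let g : {w : E A B // w ^ M = 1} →
      (A → A → rootsOfUnity M ℂ) × (B → B → rootsOfUnity M ℂ) ×
      (A → B → rootsOfUnity M ℂ) × (A → rootsOfUnity M ℂ) := fun w =>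
    (fun a a' => ⟨w.1.1 a a', (mem_rootsOfUnity M _).mpr (by
        simpa using congrFun (congrFun (congrArg (fun t => t.1) w.2) a) a')⟩,
     fun b b' => ⟨w.1.2.1 b b', (mem_rootsOfUnity M _).mpr (by
        simpa using congrFun (congrFun (congrArg (fun t => t.2.1) w.2) b) b')⟩,
     fun a b => ⟨w.1.2.2.1 a b, (mem_rootsOfUnity M _).mpr (by
        simpa using congrFun (congrFun (congrArg (fun t => t.2.2.1) w.2) a) b)⟩,
     fun a => ⟨w.1.2.2.2 a, (mem_rootsOfUnity M _).mpr (by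
        simpa using congrFun (congrArg (fun t => t.2.2.2) w.2) a)⟩)
  have hg : Function.Injective g := by
    intro w w' h
    refine Subtype.ext (Prod.ext ?_ (Prod.ext ?_ (Prod.ext ?_ ?_)))
    · funext a a'
      exact congrArg Subtype.val (congrFun (congrFun (congrArg (fun t => t.1) h) a) a')
    · funext b b'
      exact congrArg Subtype.val (congrFun (congrFun (congrArg (fun t => t.2.1) h) b) b')
    · funext a b
      exact congrArg Subtype.val (congrFun (congrFun (congrArg (fun t => t.2.2.1) h) a) b)
    · funext a
      exact congrArg Subtype.val (congrFun (congrArg (fun t => t.2.2.2) h) a)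
  exact Finite.of_injective g hg

end RRBProof

set_option linter.unusedSectionVars false in
/-- For a finite relative Rota-Baxter group `𝒜 = (A, B, β, T)`, the Schur
multiplier `M_{RRB}(𝒜) = H²_{RRB}(𝒜, 𝒞)` (cocycles modulo coboundaries with values in
`𝒞 = (ℂˣ, ℂˣ, trivial, id)`) is a finite abelian group: there is a finite abelian group
`Q` and a class map from cocycles onto `Q` which is multiplicative and identifies exactly
the cohomologous cocycles. -/
theorem schurMultiplier_finite_abelian {A B : Type*} [Group A] [Group B]
    [Fintype A] [Fintype B] (β : B →* MulAut A) (T : A → B)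
    (hT : ∀ a₁ a₂ : A, T a₁ * T a₂ = T (a₁ * β (T a₁) a₂)) :
    ∃ (Q : Type) (_ : CommGroup Q) (_ : Finite Q)
      (f : ((A → A → ℂˣ) × (B → B → ℂˣ) × (A → B → ℂˣ) × (A → ℂˣ)) → Q),
      (∀ z w, IsRRBCocycle β T (MonoidHom.id ℂˣ) z.1 z.2.1 z.2.2.1 z.2.2.2 →
          IsRRBCocycle β T (MonoidHom.id ℂˣ) w.1 w.2.1 w.2.2.1 w.2.2.2 →
          f (z * w) = f z * f w) ∧
      (∀ q : Q, ∃ z, IsRRBCocycle β T (MonoidHom.id ℂˣ) z.1 z.2.1 z.2.2.1 z.2.2.2 ∧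
          f z = q) ∧
      (∀ z w, IsRRBCocycle β T (MonoidHom.id ℂˣ) z.1 z.2.1 z.2.2.1 z.2.2.2 →
          IsRRBCocycle β T (MonoidHom.id ℂˣ) w.1 w.2.1 w.2.2.1 w.2.2.2 →
          (f z = f w ↔
            IsRRBCoboundary β T (MonoidHom.id ℂˣ) (z * w⁻¹).1 (z * w⁻¹).2.1
              (z * w⁻¹).2.2.1 (z * w⁻¹).2.2.2)) := by
  classical
  open RRBProof in
  set M := Fintype.card A * Fintype.card B * Fintype.card A with hMdef
  have hM : 0 < M := by positivity
  set Cb : Subgroup (E A B) := (dMap β T).range with hCb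
  set π := QuotientGroup.mk' Cb with hπ
  set Q₀ : Subgroup (E A B ⧸ Cb) := (Zsub β T).map π with hQ₀
  -- finiteness of Q₀
  have himg : (Q₀ : Set (E A B ⧸ Cb)) ⊆ π '' ({w : E A B | w ^ M = 1} ∩ ↑(Zsub β T)) := by
    rintro _ ⟨z, hz, rfl⟩
    obtain ⟨w, hw, hcob, hwM⟩ := exists_rep β T hT hz
    refine ⟨w, ⟨hwM, hw⟩, ?_⟩
    have hmem : w⁻¹ * z ∈ Cb := by
      have : w⁻¹ * z = z * w⁻¹ := mul_comm _ _
      rw [this]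
      exact hcob
    exact QuotientGroup.eq.mpr hmem
  have hfin : ((Q₀ : Set (E A B ⧸ Cb))).Finite :=
    Set.Finite.subset (Set.Finite.image _ ((pow_set_finite hM).inter_of_left _)) himg
  haveI : Finite ↥Q₀ := hfin.to_subtype
  haveI : Small.{0} ↥Q₀ := inferInstance
  let Qt : Type := Shrink.{0} ↥Q₀
  letI instQ : CommGroup Qt := inferInstance
  let μ : Qt ≃* ↥Q₀ := Shrink.mulEquiv
  haveI : Finite Qt := Finite.of_equiv ↥Q₀ (equivShrink ↥Q₀)
  let f : E A B → Qt := fun z =>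
    if h : z ∈ Zsub β T then μ.symm ⟨π z, Subgroup.mem_map_of_mem π h⟩ else 1
  refine ⟨Qt, instQ, inferInstance, f, ?_, ?_, ?_⟩
  · intro z w hz hw
    have hzw : z * w ∈ Zsub β T := mul_mem hz hw
    show f (z * w) = f z * f w
    rw [show f (z*w) = μ.symm ⟨π (z*w), Subgroup.mem_map_of_mem π hzw⟩ from dif_pos hzw,
      show f z = μ.symm ⟨π z, Subgroup.mem_map_of_mem π hz⟩ from dif_pos hz,
      show f w = μ.symm ⟨π w, Subgroup.mem_map_of_mem π hw⟩ from dif_pos hw]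
    have : (⟨π (z*w), Subgroup.mem_map_of_mem π hzw⟩ : ↥Q₀)
        = ⟨π z, Subgroup.mem_map_of_mem π hz⟩ * ⟨π w, Subgroup.mem_map_of_mem π hw⟩ :=
      Subtype.ext (map_mul π z w)
    rw [this, map_mul]
  · intro q
    obtain ⟨z, hz, hπz⟩ := Subgroup.mem_map.mp (μ q).2
    refine ⟨z, hz, ?_⟩
    show f z = q
    rw [show f z = μ.symm ⟨π z, Subgroup.mem_map_of_mem π hz⟩ from dif_pos hz]
    have : (⟨π z, Subgroup.mem_map_of_mem π hz⟩ : ↥Q₀) = μ q := Subtype.ext hπz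
    rw [this, MulEquiv.symm_apply_apply]
  · intro z w hz hw
    rw [show f z = μ.symm ⟨π z, Subgroup.mem_map_of_mem π hz⟩ from dif_pos hz,
      show f w = μ.symm ⟨π w, Subgroup.mem_map_of_mem π hw⟩ from dif_pos hw]
    constructor
    · intro h
      have h2 : π z = π w :=
        Subtype.ext_iff.mp (μ.symm.injective h)
      have h3 : z⁻¹ * w ∈ Cb := QuotientGroup.eq.mp h2
      have heq : z * w⁻¹ = (z⁻¹ * w)⁻¹ := by
        rw [mul_inv_rev, inv_inv, mul_comm]
      rw [cob_iff β T, heq]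
      exact inv_mem h3
    · intro h
      have h1 : z * w⁻¹ ∈ Cb := (cob_iff β T _).mp h
      have h3 : z⁻¹ * w ∈ Cb := by
        have heq : z⁻¹ * w = (z * w⁻¹)⁻¹ := by
          rw [mul_inv_rev, inv_inv, mul_comm]
        rw [heq]
        exact inv_mem h1
      have h2 : π z = π w := QuotientGroup.eq.mpr h3
      exact congrArg μ.symm (Subtype.ext h2)
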